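/- Let H ≤ F_p^×, μ = μ_H, and let k, δ, η be as in Proposition on finding Λ_δ (so δ < η/k², k ≥ 4, and ∑_ξ ν̂_k(ξ)² ≤ p^{2η}∑_{ξ∈Λ_δ}ν̂_k(ξ)²). Then p^{−10η} ∑_ξ ν̂_k(ξ)² ≤ ∑_{ξ,x∈F_p} ν̂_k(ξ)² ν̂_k(xξ)² ν_k(x). -/

import Mathlib

open Finset Complex
open scoped Classical BigOperators Pointwise

/-- The additive character `x ↦ e^{2πix/p}` on `ZMod p`. -/
noncomputable def ePsi (p : ℕ) (x : ZMod p) : ℂ :=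
  Complex.exp (2 * Real.pi * Complex.I * (x.val : ℂ) / (p : ℂ))

/-- Fourier transform of a (real) measure on `ZMod p`. -/
noncomputable def ft (p : ℕ) [NeZero p] (μ : ZMod p → ℝ) (ξ : ZMod p) : ℂ :=
  ∑ x : ZMod p, (μ x : ℂ) * ePsi p (x * ξ)

/-- Convolution of two functions on `ZMod p`. -/
noncomputable def cnv (p : ℕ) [NeZero p] (f g : ZMod p → ℝ) (x : ZMod p) : ℝ :=
  ∑ y : ZMod p, f y * g (x - y)

/-- `φ(x) = p · (μ ∗ μ⁻)(x)`. -/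
noncomputable def phiF (p : ℕ) [NeZero p] (μ : ZMod p → ℝ) (x : ZMod p) : ℝ :=
  (p : ℝ) * cnv p μ (fun y => μ (-y)) x

/-- `k`-fold convolution of `f` (0-fold is the Dirac mass at 0). -/
noncomputable def convIter (p : ℕ) [NeZero p] (f : ZMod p → ℝ) : ℕ → ZMod p → ℝ
  | 0 => fun x => if x = 0 then 1 else 0
  | n + 1 => cnv p f (convIter p f n)

/-- `ν_k`, the `k`-fold convolution of `ν = μ ∗ μ⁻`. -/
noncomputable def nuk (p : ℕ) [NeZero p] (μ : ZMod p → ℝ) (k : ℕ) : ZMod p → ℝ :=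
  convIter p (cnv p μ (fun y => μ (-y))) k

/-- `Λ_δ`, the set of large Fourier coefficients. -/
noncomputable def Lam (p : ℕ) [NeZero p] (μ : ZMod p → ℝ) (δ : ℝ) : Finset (ZMod p) :=
  Finset.univ.filter (fun ξ => (p : ℝ) ^ (-δ) < ‖ft p μ ξ‖)

section Aux
variable {p : ℕ} [NeZero p]

lemma ePsi_natCast (m : ℕ) : ePsi p (m : ZMod p) = Complex.exp (2 * Real.pi * Complex.I * (m : ℂ) / (p : ℂ)) := by
  have hp : (p:ℂ) ≠ 0 := by exact_mod_cast (NeZero.ne p)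
  unfold ePsi
  rw [ZMod.val_natCast]
  obtain ⟨q, hq⟩ : ∃ q, m = p * q + m % p := ⟨m / p, (Nat.div_add_mod m p).symm ▸ by omega⟩
  rw [show (m:ℂ) = (p:ℂ) * q + (m % p : ℕ) by exact_mod_cast congrArg (Nat.cast : ℕ → ℂ) hq]
  rw [mul_add, add_div, Complex.exp_add]
  have : 2 * (Real.pi:ℂ) * Complex.I * ((p:ℂ) * q) / p = ((q:ℤ):ℂ) * (2 * Real.pi * Complex.I) := by
    push_cast; field_simp
  rw [this, Complex.exp_int_mul_two_pi_mul_I (q:ℤ), one_mul]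

lemma ePsi_add (a b : ZMod p) : ePsi p (a + b) = ePsi p a * ePsi p b := by
  have h1 : ((a.val + b.val : ℕ) : ZMod p) = a + b := by push_cast [ZMod.natCast_val, ZMod.cast_id]; ring
  rw [← h1, ePsi_natCast]
  unfold ePsi
  rw [← Complex.exp_add]
  push_cast
  ring_nf

lemma ePsi_zero : ePsi p (0 : ZMod p) = 1 := by
  unfold ePsi; simp

lemma ePsi_ne_zero (a : ZMod p) : ePsi p a ≠ 0 := Complex.exp_ne_zero _

lemma ePsi_neg (a : ZMod p) : ePsi p (-a) = (ePsi p a)⁻¹ := by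
  have := ePsi_add (-a) a
  rw [neg_add_cancel, ePsi_zero] at this
  exact eq_inv_of_mul_eq_one_left this.symm

lemma conj_ePsi (a : ZMod p) : (starRingEnd ℂ) (ePsi p a) = ePsi p (-a) := by
  rw [ePsi_neg]
  unfold ePsi
  rw [← Complex.exp_conj, ← Complex.exp_neg]
  congr 1
  simp only [map_div₀, map_mul, Complex.conj_I, Complex.conj_natCast, Complex.conj_ofReal,
    map_ofNat]
  ring

lemma ft_cnv (f g : ZMod p → ℝ) (ξ : ZMod p) :
    ft p (cnv p f g) ξ = ft p f ξ * ft p g ξ := by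
  have key : ∀ y : ZMod p, ∑ x : ZMod p, ((g (x - y) : ℝ) : ℂ) * ePsi p (x * ξ)
      = ePsi p (y * ξ) * ft p g ξ := by
    intro y
    rw [← Equiv.sum_comp (Equiv.addRight y) (fun x => ((g (x - y) : ℝ) : ℂ) * ePsi p (x * ξ))]
    unfold ft
    rw [Finset.mul_sum]
    refine Finset.sum_congr rfl fun z _ => ?_
    simp only [Equiv.coe_addRight, add_sub_cancel_right]
    rw [show (z + y) * ξ = y * ξ + z * ξ by ring, ePsi_add]
    ring
  calc ft p (cnv p f g) ξ
      = ∑ x : ZMod p, ∑ y : ZMod p, ((f y : ℝ):ℂ) * ((g (x - y) : ℝ):ℂ) * ePsi p (x * ξ) := by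
        unfold ft cnv
        refine Finset.sum_congr rfl fun x _ => ?_
        push_cast
        rw [Finset.sum_mul]
    _ = ∑ y : ZMod p, ∑ x : ZMod p, ((f y : ℝ):ℂ) * ((g (x - y) : ℝ):ℂ) * ePsi p (x * ξ) :=
        Finset.sum_comm
    _ = ∑ y : ZMod p, ((f y : ℝ):ℂ) * ePsi p (y * ξ) * ft p g ξ := by
        refine Finset.sum_congr rfl fun y _ => ?_
        have h1 : ∑ x : ZMod p, ((f y : ℝ):ℂ) * ((g (x - y) : ℝ):ℂ) * ePsi p (x * ξ)
            = ((f y : ℝ):ℂ) * ∑ x : ZMod p, ((g (x - y) : ℝ):ℂ) * ePsi p (x * ξ) := by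
          rw [Finset.mul_sum]; exact Finset.sum_congr rfl fun x _ => by ring
        rw [h1, key y]; ring
    _ = ft p f ξ * ft p g ξ := by rw [← Finset.sum_mul]; rfl

lemma ft_dirac (ξ : ZMod p) : ft p (fun x => if x = 0 then (1:ℝ) else 0) ξ = 1 := by
  unfold ft
  rw [Finset.sum_eq_single 0]
  · simp [ePsi_zero]
  · intro b _ hb; simp [hb]
  · simp

lemma ft_convIter (f : ZMod p → ℝ) (n : ℕ) (ξ : ZMod p) :
    ft p (convIter p f n) ξ = (ft p f ξ) ^ n := by
  induction n with
  | zero => simpa [convIter] using ft_dirac ξ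
  | succ m ih => rw [convIter, ft_cnv, ih, pow_succ]; ring

lemma ft_neg (f : ZMod p → ℝ) (ξ : ZMod p) :
    ft p (fun y => f (-y)) ξ = (starRingEnd ℂ) (ft p f ξ) := by
  unfold ft
  rw [map_sum, ← Equiv.sum_comp (Equiv.neg (ZMod p)) _]
  refine Finset.sum_congr rfl fun y _ => ?_
  simp only [Equiv.neg_apply, neg_neg, map_mul, Complex.conj_ofReal, conj_ePsi]
  rw [show -(y*ξ) = (-y)*ξ by ring]

/-- `ft` of `ν_k` is the real number `|μ̂(ξ)|^(2k)`. -/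
lemma ft_nuk (μ : ZMod p → ℝ) (k : ℕ) (ξ : ZMod p) :
    ft p (nuk p μ k) ξ = ((‖ft p μ ξ‖ ^ (2 * k) : ℝ) : ℂ) := by
  unfold nuk
  rw [ft_convIter, ft_cnv, ft_neg, Complex.mul_conj, Complex.normSq_eq_norm_sq]
  push_cast
  rw [pow_mul]

lemma abs_ft_nuk (μ : ZMod p → ℝ) (k : ℕ) (ξ : ZMod p) :
    ‖ft p (nuk p μ k) ξ‖ = ‖ft p μ ξ‖ ^ (2 * k) := by
  rw [ft_nuk]
  rw [Complex.norm_real, Real.norm_eq_abs, _root_.abs_of_nonneg (by positivity)]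

section mu

lemma sum_cnv (f g : ZMod p → ℝ) : ∑ x : ZMod p, cnv p f g x = (∑ x : ZMod p, f x) * (∑ x : ZMod p, g x) := by
  unfold cnv
  rw [Finset.sum_comm, Finset.sum_mul_sum]
  refine Finset.sum_congr rfl fun y _ => ?_
  rw [← Finset.mul_sum, ← Finset.mul_sum]
  congr 1
  exact Equiv.sum_comp (Equiv.subRight y) g

lemma cnv_nonneg {f g : ZMod p → ℝ} (hf : ∀ x, 0 ≤ f x) (hg : ∀ x, 0 ≤ g x) (x : ZMod p) :
    0 ≤ cnv p f g x := Finset.sum_nonneg fun y _ => mul_nonneg (hf y) (hg _)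

lemma sum_neg (f : ZMod p → ℝ) : ∑ x : ZMod p, f (-x) = ∑ x : ZMod p, f x :=
  Equiv.sum_comp (Equiv.neg (ZMod p)) f

variable (H : Subgroup (ZMod p)ˣ) (μ : ZMod p → ℝ)
  (hμ : ∀ x, μ x = if ∃ u ∈ H, ((u : (ZMod p)ˣ) : ZMod p) = x
        then 1 / (Nat.card H : ℝ) else 0)

include hμ

lemma mu_nonneg : ∀ x, 0 ≤ μ x := by
  intro x; rw [hμ]; split <;> positivity

lemma mu_sum : ∑ x : ZMod p, μ x = 1 := by
  haveI : Fintype H := Fintype.ofFinite H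
  have hinj : Function.Injective (fun u : H => ((u : (ZMod p)ˣ) : ZMod p)) := by
    intro a b hab
    exact Subtype.ext (Units.ext hab)
  have himg : (Finset.univ.filter (fun x : ZMod p => ∃ u ∈ H, ((u : (ZMod p)ˣ) : ZMod p) = x))
      = Finset.univ.image (fun u : H => ((u : (ZMod p)ˣ) : ZMod p)) := by
    ext x
    simp only [Finset.mem_filter, Finset.mem_univ, true_and, Finset.mem_image]
    constructor
    · rintro ⟨u, hu, rfl⟩; exact ⟨⟨u, hu⟩, rfl⟩
    · rintro ⟨⟨u, hu⟩, rfl⟩; exact ⟨u, hu, rfl⟩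

  have hcard : (Finset.univ.filter (fun x : ZMod p => ∃ u ∈ H, ((u : (ZMod p)ˣ) : ZMod p) = x)).card
      = Nat.card H := by
    rw [himg, Finset.card_image_of_injective _ hinj, Finset.card_univ, Nat.card_eq_fintype_card]
  have hpos : 0 < Nat.card H := Nat.card_pos
  calc ∑ x : ZMod p, μ x
      = ∑ x : ZMod p, (if ∃ u ∈ H, ((u : (ZMod p)ˣ) : ZMod p) = x then 1 / (Nat.card H : ℝ) else 0) :=
        Finset.sum_congr rfl fun x _ => hμ x
    _ = ∑ x ∈ Finset.univ.filter (fun x : ZMod p => ∃ u ∈ H, ((u : (ZMod p)ˣ) : ZMod p) = x),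
          (1 / (Nat.card H : ℝ)) := by
        rw [Finset.sum_filter]
    _ = 1 := by
        rw [Finset.sum_const, hcard, nsmul_eq_mul]
        field_simp

lemma mu_inv {u : (ZMod p)ˣ} (hu : u ∈ H) (x : ZMod p) : μ ((u : ZMod p) * x) = μ x := by
  rw [hμ, hμ]
  congr 1
  apply propext
  constructor
  · rintro ⟨v, hv, hvx⟩
    refine ⟨u⁻¹ * v, mul_mem (inv_mem hu) hv, ?_⟩
    have : ((u⁻¹ : (ZMod p)ˣ) : ZMod p) * ((v : (ZMod p)ˣ) : ZMod p) = ((u⁻¹ : (ZMod p)ˣ) : ZMod p) * ((u : ZMod p) * x) := by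
      rw [hvx]
    rw [Units.val_mul, this, ← mul_assoc]
    norm_cast
    rw [inv_mul_cancel]
    simp
  · rintro ⟨v, hv, hvx⟩
    refine ⟨u * v, mul_mem hu hv, ?_⟩
    rw [Units.val_mul, hvx]

lemma mu_hat_inv [Fact p.Prime] {u : (ZMod p)ˣ} (hu : u ∈ H) (ξ : ZMod p) :
    ft p μ ((u : ZMod p) * ξ) = ft p μ ξ := by
  have hne : ((u : ZMod p)) ≠ 0 := u.ne_zero
  unfold ft
  refine Fintype.sum_equiv (Equiv.mulLeft₀ (u : ZMod p) hne) _ _ fun x => ?_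
  simp only [Equiv.mulLeft₀_apply]
  rw [mu_inv H μ hμ hu x]
  congr 2
  ring

end mu

section nuk
variable (H : Subgroup (ZMod p)ˣ) (μ : ZMod p → ℝ)
  (hμ : ∀ x, μ x = if ∃ u ∈ H, ((u : (ZMod p)ˣ) : ZMod p) = x
        then 1 / (Nat.card H : ℝ) else 0)

include hμ

lemma nuk_nonneg (k : ℕ) : ∀ x, 0 ≤ nuk p μ k x := by
  have hm := mu_nonneg H μ hμ
  have hnu : ∀ x, 0 ≤ cnv p μ (fun y => μ (-y)) x :=
    cnv_nonneg hm (fun x => hm (-x))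
  unfold nuk
  induction k with
  | zero => intro x; simp only [convIter]; split <;> norm_num
  | succ m ih => intro x; exact cnv_nonneg hnu ih x

lemma nuk_sum (k : ℕ) : ∑ x : ZMod p, nuk p μ k x = 1 := by
  have hms := mu_sum H μ hμ
  have hnu : ∑ x : ZMod p, cnv p μ (fun y => μ (-y)) x = 1 := by
    rw [sum_cnv, hms, _root_.sum_neg, hms, one_mul]
  unfold nuk
  induction k with
  | zero =>
    simp only [convIter]
    rw [Finset.sum_ite_eq' Finset.univ (0 : ZMod p) (fun _ => (1:ℝ))]
    simp
  | succ m ih => rw [convIter, sum_cnv, hnu, ih, one_mul]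

variable [Fact p.Prime]

lemma abs_mu_hat_dilate {y : ZMod p} (hy : μ y ≠ 0) (ξ : ZMod p) :
    ft p μ (y * ξ) = ft p μ ξ := by
  rw [hμ] at hy
  have : ∃ u ∈ H, ((u : (ZMod p)ˣ) : ZMod p) = y := by
    by_contra h
    rw [if_neg h] at hy
    exact hy rfl
  obtain ⟨u, hu, rfl⟩ := this
  exact mu_hat_inv H μ hμ hu ξ

lemma key_id (k : ℕ) (ξ : ZMod p) :
    ft p (nuk p μ k) ξ = ∑ x : ZMod p, ((nuk p μ k x : ℝ) : ℂ) * ft p μ (x * ξ) := by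
  have swap : ∑ x : ZMod p, ((nuk p μ k x : ℝ) : ℂ) * ft p μ (x * ξ)
      = ∑ y : ZMod p, ((μ y : ℝ) : ℂ) * ft p (nuk p μ k) (y * ξ) := by
    unfold ft
    simp only [Finset.mul_sum]
    rw [Finset.sum_comm]
    refine Finset.sum_congr rfl fun y _ => Finset.sum_congr rfl fun x _ => ?_
    rw [show y * (x * ξ) = x * (y * ξ) by ring]
    ring
  rw [swap]
  have step : ∀ y : ZMod p, ((μ y : ℝ) : ℂ) * ft p (nuk p μ k) (y * ξ)
      = ((μ y : ℝ) : ℂ) * ft p (nuk p μ k) ξ := by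
    intro y
    by_cases h : μ y = 0
    · simp [h]
    · congr 1
      rw [ft_nuk, ft_nuk, abs_mu_hat_dilate H μ hμ h ξ]
  rw [Finset.sum_congr rfl (fun y _ => step y), ← Finset.sum_mul]
  have : (∑ y : ZMod p, ((μ y : ℝ) : ℂ)) = 1 := by
    rw [← Complex.ofReal_sum, mu_sum H μ hμ]
    norm_num
  rw [this, one_mul]

lemma key_ineq (k : ℕ) (ξ : ZMod p) :
    ‖ft p (nuk p μ k) ξ‖ ^ (4 * k)
      ≤ ∑ x : ZMod p, ‖ft p (nuk p μ k) (x * ξ)‖ ^ 2 * nuk p μ k x := by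
  have hnn := nuk_nonneg H μ hμ k
  have h1 : ‖ft p (nuk p μ k) ξ‖
      ≤ ∑ x : ZMod p, nuk p μ k x * ‖ft p μ (x * ξ)‖ := by
    rw [key_id H μ hμ k ξ]
    refine (norm_sum_le _ _).trans_eq ?_
    refine Finset.sum_congr rfl fun x _ => ?_
    rw [norm_mul, Complex.norm_real, Real.norm_eq_abs, _root_.abs_of_nonneg (hnn x)]
  have h2 := Real.pow_arith_mean_le_arith_mean_pow Finset.univ (nuk p μ k)
      (fun x => ‖ft p μ (x * ξ)‖) (fun i _ => hnn i) (nuk_sum H μ hμ k)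
      (fun i _ => norm_nonneg _) (4 * k)
  have h0 : (0:ℝ) ≤ ‖ft p (nuk p μ k) ξ‖ := norm_nonneg _
  calc ‖ft p (nuk p μ k) ξ‖ ^ (4 * k)
      ≤ (∑ x : ZMod p, nuk p μ k x * ‖ft p μ (x * ξ)‖) ^ (4 * k) :=
        pow_le_pow_left₀ h0 h1 _
    _ ≤ ∑ x : ZMod p, nuk p μ k x * ‖ft p μ (x * ξ)‖ ^ (4 * k) := h2
    _ = ∑ x : ZMod p, ‖ft p (nuk p μ k) (x * ξ)‖ ^ 2 * nuk p μ k x := by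
        refine Finset.sum_congr rfl fun x _ => ?_
        rw [abs_ft_nuk, ← pow_mul, show 2 * k * 2 = 4 * k by ring, mul_comm]

end nuk

end Aux

theorem stmt15 (p : ℕ) [Fact p.Prime] (H : Subgroup (ZMod p)ˣ)
    (μ : ZMod p → ℝ)
    (hμ : ∀ x, μ x = if ∃ u ∈ H, ((u : (ZMod p)ˣ) : ZMod p) = x
        then 1 / (Nat.card H : ℝ) else 0)
    (k : ℕ) (hk : 4 ≤ k) (η δ : ℝ) (hη : 0 < η) (hδ0 : 0 < δ)
    (hδ : δ < η / (k : ℝ) ^ 2)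
    (hsupp : ∑ ξ : ZMod p, ‖ft p (nuk p μ k) ξ‖ ^ 2
      ≤ (p : ℝ) ^ (2 * η) * ∑ ξ ∈ Lam p μ δ, ‖ft p (nuk p μ k) ξ‖ ^ 2) :
    (p : ℝ) ^ (-(10 * η)) * ∑ ξ : ZMod p, ‖ft p (nuk p μ k) ξ‖ ^ 2
      ≤ ∑ ξ : ZMod p, ∑ x : ZMod p,
          ‖ft p (nuk p μ k) ξ‖ ^ 2 *
            ‖ft p (nuk p μ k) (x * ξ)‖ ^ 2 * nuk p μ k x := by
  have hp : p.Prime := Fact.out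
  have hp1 : (1:ℝ) < (p:ℝ) := by exact_mod_cast hp.one_lt
  have hp0 : (0:ℝ) < (p:ℝ) := lt_trans one_pos hp1
  have hnn := nuk_nonneg H μ hμ k
  have hkpos : (0:ℝ) < (k:ℝ) := by
    have : 0 < k := by omega
    exact_mod_cast this
  -- key pointwise bound on Λ_δ
  have hkey : ∀ ξ ∈ Lam p μ δ, (p:ℝ) ^ (-(8*η))
      ≤ ∑ x : ZMod p, ‖ft p (nuk p μ k) (x * ξ)‖ ^ 2 * nuk p μ k x := by
    intro ξ hξ
    have hmem : (p:ℝ)^(-δ) < ‖ft p μ ξ‖ := by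
      have := Finset.mem_filter.1 hξ
      exact this.2
    have e1 : (p:ℝ)^(-(8*η)) ≤ (p:ℝ)^(-δ * ((8*k^2 : ℕ) : ℝ)) := by
      apply (Real.rpow_le_rpow_left_iff hp1).2
      have hδη : δ * (k:ℝ)^2 < η := (lt_div_iff₀ (by positivity)).mp hδ
      push_cast
      nlinarith [hδη, hδ0, hkpos]
    have e2 : (p:ℝ)^(-δ * ((8*k^2 : ℕ) : ℝ)) = ((p:ℝ)^(-δ))^(8*k^2 : ℕ) := by
      rw [← Real.rpow_natCast ((p:ℝ)^(-δ)) (8*k^2), ← Real.rpow_mul hp0.le]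
    have e3 : ((p:ℝ)^(-δ))^(8*k^2) ≤ ‖ft p μ ξ‖ ^ (8*k^2) :=
      pow_le_pow_left₀ (Real.rpow_nonneg hp0.le _) hmem.le _
    have e4 : ‖ft p μ ξ‖ ^ (8*k^2) = ‖ft p (nuk p μ k) ξ‖ ^ (4*k) := by
      rw [abs_ft_nuk, ← pow_mul]
      congr 1
      ring
    calc (p:ℝ) ^ (-(8*η)) ≤ ((p:ℝ)^(-δ))^(8*k^2 : ℕ) := by rw [← e2]; exact e1
      _ ≤ ‖ft p μ ξ‖ ^ (8*k^2) := e3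
      _ = ‖ft p (nuk p μ k) ξ‖ ^ (4*k) := e4
      _ ≤ _ := key_ineq H μ hμ k ξ
  -- aggregate
  have step1 : ∑ ξ ∈ Lam p μ δ, ‖ft p (nuk p μ k) ξ‖ ^ 2 * (p:ℝ)^(-(8*η))
      ≤ ∑ ξ ∈ Lam p μ δ, ‖ft p (nuk p μ k) ξ‖ ^ 2 *
          (∑ x : ZMod p, ‖ft p (nuk p μ k) (x * ξ)‖ ^ 2 * nuk p μ k x) :=
    Finset.sum_le_sum fun ξ hξ => mul_le_mul_of_nonneg_left (hkey ξ hξ) (by positivity)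
  have step2 : ∑ ξ ∈ Lam p μ δ, ‖ft p (nuk p μ k) ξ‖ ^ 2 *
          (∑ x : ZMod p, ‖ft p (nuk p μ k) (x * ξ)‖ ^ 2 * nuk p μ k x)
      ≤ ∑ ξ : ZMod p, ‖ft p (nuk p μ k) ξ‖ ^ 2 *
          (∑ x : ZMod p, ‖ft p (nuk p μ k) (x * ξ)‖ ^ 2 * nuk p μ k x) := by
    refine Finset.sum_le_sum_of_subset_of_nonneg (Finset.subset_univ _) (fun ξ _ _ => ?_)
    have : (0:ℝ) ≤ ∑ x : ZMod p, ‖ft p (nuk p μ k) (x * ξ)‖ ^ 2 * nuk p μ k x :=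
      Finset.sum_nonneg fun x _ => mul_nonneg (by positivity) (hnn x)
    positivity
  have hrw : ∑ ξ : ZMod p, ‖ft p (nuk p μ k) ξ‖ ^ 2 *
          (∑ x : ZMod p, ‖ft p (nuk p μ k) (x * ξ)‖ ^ 2 * nuk p μ k x)
      = ∑ ξ : ZMod p, ∑ x : ZMod p,
          ‖ft p (nuk p μ k) ξ‖ ^ 2 *
            ‖ft p (nuk p μ k) (x * ξ)‖ ^ 2 * nuk p μ k x := by
    refine Finset.sum_congr rfl fun ξ _ => ?_
    rw [Finset.mul_sum]
    exact Finset.sum_congr rfl fun x _ => by ring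
  have hfirst : (p : ℝ) ^ (-(10 * η)) * ∑ ξ : ZMod p, ‖ft p (nuk p μ k) ξ‖ ^ 2
      ≤ ∑ ξ ∈ Lam p μ δ, ‖ft p (nuk p μ k) ξ‖ ^ 2 * (p:ℝ)^(-(8*η)) := by
    rw [← Finset.sum_mul]
    have h1 : (p : ℝ) ^ (-(10 * η)) * ∑ ξ : ZMod p, ‖ft p (nuk p μ k) ξ‖ ^ 2
        ≤ (p : ℝ) ^ (-(10 * η)) * ((p : ℝ) ^ (2 * η) *
            ∑ ξ ∈ Lam p μ δ, ‖ft p (nuk p μ k) ξ‖ ^ 2) :=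
      mul_le_mul_of_nonneg_left hsupp (Real.rpow_nonneg hp0.le _)
    have h2 : (p : ℝ) ^ (-(10 * η)) * (p : ℝ) ^ (2 * η) = (p:ℝ)^(-(8*η)) := by
      rw [← Real.rpow_add hp0]
      norm_num
      ring_nf
    calc (p : ℝ) ^ (-(10 * η)) * ∑ ξ : ZMod p, ‖ft p (nuk p μ k) ξ‖ ^ 2
        ≤ (p : ℝ) ^ (-(10 * η)) * ((p : ℝ) ^ (2 * η) *
            ∑ ξ ∈ Lam p μ δ, ‖ft p (nuk p μ k) ξ‖ ^ 2) := h1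
      _ = (∑ ξ ∈ Lam p μ δ, ‖ft p (nuk p μ k) ξ‖ ^ 2) * (p:ℝ)^(-(8*η)) := by
          rw [← mul_assoc, h2]; ring
  calc (p : ℝ) ^ (-(10 * η)) * ∑ ξ : ZMod p, ‖ft p (nuk p μ k) ξ‖ ^ 2
      ≤ ∑ ξ ∈ Lam p μ δ, ‖ft p (nuk p μ k) ξ‖ ^ 2 * (p:ℝ)^(-(8*η)) := hfirst
    _ ≤ _ := step1
    _ ≤ _ := step2
    _ = _ := hrw
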